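/- Let K be a field, ι and L finite nonempty index sets, and V a K-vector space with basis (v_i)_{i ∈ ι}. Let v = Σ_{i ∈ ι} α_i v_i with α_i ≠ 0 for every i. Let (A_l)_{l ∈ L} be K-linear endomorphisms of V that are simultaneously diagonal in this basis: A_l v_i = λ_{l,i} · v_i for scalars λ_{l,i} ∈ K. Then the family of vectors { (∏_{l ∈ L} A_l^{β(l)}) v : β : L → ℕ } spans V if and only if for every pair of distinct indices i ≠ j in ι there exists l ∈ L with λ_{l,i} ≠ λ_{l,j}. -/

import Mathlib

/-- Auxiliary: a submodule containing `∑ α i • B i` (all `α i ≠ 0`) and invariant under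
simultaneously diagonal operators with separating eigenvalues is everything. -/
lemma stmt3_aux {K : Type*} [Field K] {ι L : Type*} [Fintype ι] [Nonempty L]
    {V : Type*} [AddCommGroup V] [Module K V] (B : Module.Basis ι K V)
    (α : ι → K) (hα : ∀ i, α i ≠ 0)
    (A : L → Module.End K V) (lam : L → ι → K)
    (hA : ∀ l i, A l (B i) = lam l i • B i)
    (hsep : ∀ i j : ι, i ≠ j → ∃ l : L, lam l i ≠ lam l j)
    (W : Submodule K V) (hvW : (∑ i, α i • B i) ∈ W)
    (hWinv : ∀ (l : L) (w : V), w ∈ W → A l w ∈ W) : W = ⊤ := by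
  classical
  rw [eq_top_iff, ← B.span_eq, Submodule.span_le]
  rintro x ⟨i, rfl⟩
  -- choose separating operators
  have hg : ∀ j : ι, ∃ l : L, j ≠ i → lam l i ≠ lam l j := by
    intro j
    by_cases h : j = i
    · exact ⟨Classical.arbitrary L, fun hj => absurd h hj⟩
    · obtain ⟨l, hl⟩ := hsep i j (Ne.symm h)
      exact ⟨l, fun _ => hl⟩
  choose g hgs using hg
  have step : ∀ S : Finset ι,
      (∑ k, (α k * ∏ j ∈ S, (lam (g j) k - lam (g j) j)) • B k) ∈ W := by
    intro S
    induction S using Finset.induction_on with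
    | empty => simpa using hvW
    | @insert j S hj ih =>
      have h1 := hWinv (g j) _ ih
      have h2 := W.sub_mem h1 (W.smul_mem (lam (g j) j) ih)
      have hEq : (∑ k, (α k * ∏ m ∈ insert j S, (lam (g m) k - lam (g m) m)) • B k)
          = A (g j) (∑ k, (α k * ∏ m ∈ S, (lam (g m) k - lam (g m) m)) • B k)
            - lam (g j) j • (∑ k, (α k * ∏ m ∈ S, (lam (g m) k - lam (g m) m)) • B k) := by
        rw [map_sum, Finset.smul_sum, ← Finset.sum_sub_distrib]
        refine Finset.sum_congr rfl fun k _ => ?_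
        rw [map_smul, hA, smul_smul, smul_smul, ← sub_smul, Finset.prod_insert hj]
        congr 1
        ring
      rw [hEq]
      exact h2
  have hfinal := step (Finset.univ.erase i)
  rw [Finset.sum_eq_single i
    (fun k _ hk => by
      have hz : (∏ j ∈ Finset.univ.erase i, (lam (g j) k - lam (g j) j)) = (0 : K) :=
        Finset.prod_eq_zero (Finset.mem_erase.mpr ⟨hk, Finset.mem_univ k⟩) (sub_self _)
      rw [hz, mul_zero, zero_smul])
    (fun h => absurd (Finset.mem_univ i) h)] at hfinal
  set c : K := α i * ∏ j ∈ Finset.univ.erase i, (lam (g j) i - lam (g j) j) with hc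
  have hcne : c ≠ 0 := by
    refine mul_ne_zero (hα i) (Finset.prod_ne_zero_iff.mpr fun j hj => ?_)
    exact sub_ne_zero.mpr (hgs j (Finset.ne_of_mem_erase hj))
  have := W.smul_mem c⁻¹ hfinal
  rwa [smul_smul, inv_mul_cancel₀ hcne, one_smul] at this


/-- Section 5.3 of the paper: if `V` has basis `(v_i)` with `v = Σ α_i v_i`, all `α_i ≠ 0`,
and `(A_l)` are simultaneously diagonal endomorphisms `A_l v_i = λ_{l,i} v_i`, then the
vectors `(∏_l A_l^{β(l)}) v`, over all `β : L → ℕ`, span `V` iff for any two distinct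
basis indices `i ≠ j` some `A_l` has different eigenvalues on `v_i` and `v_j`. -/
theorem stmt3 {K : Type*} [Field K] {ι L : Type*} [Fintype ι] [Fintype L]
    [Nonempty ι] [Nonempty L]
    {V : Type*} [AddCommGroup V] [Module K V] (B : Module.Basis ι K V)
    (α : ι → K) (hα : ∀ i, α i ≠ 0) (v : V) (hv : v = ∑ i, α i • B i)
    (A : L → Module.End K V) (lam : L → ι → K)
    (hA : ∀ l i, A l (B i) = lam l i • B i) :
    Submodule.span K (Set.range (fun β : L → ℕ =>
      (Finset.univ.noncommProd (fun l => (A l) ^ (β l))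
        (fun x _ y _ _ =>
          Commute.pow_pow
            (show A x * A y = A y * A x from
              B.ext fun i => by
                simp [Module.End.mul_apply, hA, smul_smul, mul_comm])
            (β x) (β y))) v)) = ⊤
      ↔ ∀ i j : ι, i ≠ j → ∃ l : L, lam l i ≠ lam l j := by
  classical
  have hpow : ∀ (l : L) (n : ℕ) (i : ι), ((A l) ^ n) (B i) = (lam l i) ^ n • B i := by
    intro l n i
    induction n with
    | zero => simp
    | succ n ih =>
      rw [pow_succ, Module.End.mul_apply, hA, map_smul, ih, smul_smul, ← pow_succ']
  have key : ∀ (s : Finset L) (β : L → ℕ)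
      (h : (↑s : Set L).Pairwise (Function.onFun Commute fun l => (A l) ^ (β l))) (i : ι),
      (s.noncommProd (fun l => (A l) ^ (β l)) h) (B i)
        = (∏ l ∈ s, lam l i ^ β l) • B i := by
    intro s
    induction s using Finset.induction_on with
    | empty => intro β h i; simp
    | @insert a s ha ih =>
      intro β h i
      rw [Finset.noncommProd_insert_of_notMem _ _ _ _ ha, Module.End.mul_apply, ih,
        map_smul, hpow, Finset.prod_insert ha, smul_smul, mul_comm]
  have hPv : ∀ (β : L → ℕ)
      (h : (↑(Finset.univ : Finset L) : Set L).Pairwise (Function.onFun Commute fun l => (A l) ^ (β l))),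
      (Finset.univ.noncommProd (fun l => (A l) ^ (β l)) h) v
        = ∑ i, (α i * ∏ l, lam l i ^ β l) • B i := by
    intro β h
    rw [hv, map_sum]
    refine Finset.sum_congr rfl fun i _ => ?_
    rw [map_smul, key, smul_smul]
  conv_lhs => arg 1; arg 2; arg 1; ext β; equals (∑ i, (α i * ∏ l, lam l i ^ β l) • B i) => exact hPv β _
  constructor
  · -- span = ⊤ → separation
    intro hspan
    by_contra hcon
    push_neg at hcon
    obtain ⟨i, j, hij, heq⟩ := hcon
    set φ : V →ₗ[K] K := α j • B.coord i - α i • B.coord j with hφ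
    have hφv : ∀ c : ι → K, φ (∑ k, c k • B k) = α j * c i - α i * c j := by
      intro c
      simp only [hφ, LinearMap.sub_apply, LinearMap.smul_apply, map_sum, Module.Basis.coord_apply,
        map_smul, Module.Basis.repr_self, Finsupp.smul_apply, Finsupp.single_apply, smul_eq_mul,
        mul_ite, mul_zero, mul_one, Finset.sum_sub_distrib, Finset.sum_ite_eq',
        Finset.mem_univ, if_true]
      simp only [mul_sub]
      rw [Finset.sum_sub_distrib]
      simp only [mul_ite, mul_zero, Finset.sum_ite_eq', Finset.mem_univ, if_true]
      ring
    have hBi : B i ∈ Submodule.span K (Set.range (fun β : L → ℕ =>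
        ∑ k, (α k * ∏ l, lam l k ^ β l) • B k)) := hspan ▸ Submodule.mem_top
    have h0 : φ (B i) = 0 := by
      refine Submodule.span_induction (p := fun x _ => φ x = 0) ?_ ?_ ?_ ?_ hBi
      · rintro x ⟨β, rfl⟩
        rw [hφv]
        have hprod : (∏ l, lam l i ^ β l) = ∏ l, lam l j ^ β l :=
          Finset.prod_congr rfl fun l _ => by rw [heq l]
        rw [hprod]
        ring
      · simp
      · intro x y _ _ hx hy; rw [map_add, hx, hy, add_zero]
      · intro a x _ hx; rw [map_smul, hx, smul_zero]
    have : φ (B i) = α j := by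
      simp [hφ, Module.Basis.coord_apply, Module.Basis.repr_self, Finsupp.single_apply, hij,
        Ne.symm hij]
    rw [this] at h0
    exact hα j h0
  · -- separation → span = ⊤
    intro hsep
    refine stmt3_aux B α hα A lam hA hsep _ ?_ ?_
    · have h1 : (∑ k, (α k * ∏ l, lam l k ^ (0 : ℕ)) • B k) ∈
          Submodule.span K (Set.range fun β : L → ℕ => ∑ k, (α k * ∏ l, lam l k ^ β l) • B k) :=
        Submodule.subset_span ⟨fun _ => 0, rfl⟩
      simpa using h1
    · intro l w hw
      refine Submodule.span_induction (p := fun x _ => A l x ∈ _) ?_ ?_ ?_ ?_ hw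
      · rintro x ⟨β, rfl⟩
        have hEq : A l (∑ k, (α k * ∏ l', lam l' k ^ β l') • B k)
            = ∑ k, (α k * ∏ l', lam l' k ^ (Function.update β l (β l + 1)) l') • B k := by
          rw [map_sum]
          refine Finset.sum_congr rfl fun k _ => ?_
          rw [map_smul, hA, smul_smul]
          congr 1
          have hupd : ∏ x ∈ Finset.univ.erase l, lam x k ^ (Function.update β l (β l + 1)) x
              = ∏ x ∈ Finset.univ.erase l, lam x k ^ β x :=
            Finset.prod_congr rfl fun x hx => by
              rw [Function.update_of_ne (Finset.ne_of_mem_erase hx)]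
          have h1 : (∏ l', lam l' k ^ (Function.update β l (β l + 1)) l')
              = lam l k * ∏ l', lam l' k ^ β l' := by
            rw [← Finset.mul_prod_erase Finset.univ
                (fun l' => lam l' k ^ (Function.update β l (β l + 1)) l') (Finset.mem_univ l),
              ← Finset.mul_prod_erase Finset.univ
                (fun l' => lam l' k ^ β l') (Finset.mem_univ l),
              Function.update_self, hupd, pow_succ]
            ring
          rw [h1]
          ring
        rw [hEq]
        exact Submodule.subset_span (Set.mem_range_self _)
      · simp
      · intro x y _ _ hx hy; rw [map_add]; exact Submodule.add_mem _ hx hy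
      · intro a x _ hx; rw [map_smul]; exact Submodule.smul_mem _ a hx
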